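/- Let n ≥ 1, R ≥ 2 and 1 ≤ c ≤ R − 1 be integers, let n_{c+1}, …, n_R ≥ 1 be integers with Σ_{j=c+1}^R n_j = n, let p⁰_1, …, p⁰_R be strictly positive reals, and let a, b be real numbers with a > 0 and such that p̂^{ab}_j = n_j/n^b − (ac + n^{1−b} − 1)/(R−c) > 0 for every j ∈ {c+1, …, R}. Then G_{p⁰}(p̂^{ab}) = n^{1−b} · G_{p⁰}(p*) − g(a,b), where g(a,b) = 2n·( ((ac + n^{1−b} − 1)/(R−c)) Σ_{j=c+1}^R ln((n_j(R−c) − n^b(ac + n^{1−b} − 1))/(p⁰_j n^b (R−c))) − a Σ_{i=1}^c ln(a/p⁰_i) − n^{1−b} Σ_{j=c+1}^R (n_j/n) ln((n_j(R−c) − n^b(ac + n^{1−b} − 1))/(n_j n^{b−1} (R−c))) ). -/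

import Mathlib

open Finset

/-- Closed-form expression for the corrected Kullback statistic:
`G_{p⁰}(p̂^{ab}) = n^{1−b} · G_{p⁰}(p*) − g(a,b)`, where `p*` is the maximum
likelihood estimator (zeros in the first `c` cells, whose terms contribute `0`
to `G_{p⁰}(p*)`) and `p̂^{ab}` is the corrected estimator of the paper. -/
theorem corrected_kullback_statistic
    (n R c : ℕ) (hn : 1 ≤ n) (hR : 2 ≤ R) (hc1 : 1 ≤ c) (hcR : c ≤ R - 1)
    (nj : ℕ → ℕ) (hnj : ∀ j ∈ Finset.Icc (c + 1) R, 1 ≤ nj j)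
    (hnsum : ∑ j ∈ Finset.Icc (c + 1) R, nj j = n)
    (p0 : ℕ → ℝ) (hp0 : ∀ r ∈ Finset.Icc 1 R, 0 < p0 r)
    (a b : ℝ) (ha : 0 < a)
    (hpos : ∀ j ∈ Finset.Icc (c + 1) R,
      0 < (nj j : ℝ) / (n : ℝ) ^ b -
        (a * (c : ℝ) + (n : ℝ) ^ (1 - b) - 1) / ((R : ℝ) - (c : ℝ))) :
    -- `G_{p⁰}(p̂^{ab})`
    2 * (n : ℝ) *
        (∑ i ∈ Finset.Icc 1 c, a * Real.log (a / p0 i) +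
          ∑ j ∈ Finset.Icc (c + 1) R,
            ((nj j : ℝ) / (n : ℝ) ^ b -
                (a * (c : ℝ) + (n : ℝ) ^ (1 - b) - 1) / ((R : ℝ) - (c : ℝ))) *
              Real.log
                (((nj j : ℝ) / (n : ℝ) ^ b -
                    (a * (c : ℝ) + (n : ℝ) ^ (1 - b) - 1) / ((R : ℝ) - (c : ℝ))) /
                  p0 j)) =
      -- `n^{1−b} · G_{p⁰}(p*)`
      (n : ℝ) ^ (1 - b) *
          (2 * (n : ℝ) *
            ∑ j ∈ Finset.Icc (c + 1) R,
              ((nj j : ℝ) / (n : ℝ)) * Real.log ((nj j : ℝ) / ((n : ℝ) * p0 j))) -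
        -- `g(a,b)`
        2 * (n : ℝ) *
          ((a * (c : ℝ) + (n : ℝ) ^ (1 - b) - 1) / ((R : ℝ) - (c : ℝ)) *
              ∑ j ∈ Finset.Icc (c + 1) R,
                Real.log
                  (((nj j : ℝ) * ((R : ℝ) - (c : ℝ)) -
                      (n : ℝ) ^ b * (a * (c : ℝ) + (n : ℝ) ^ (1 - b) - 1)) /
                    (p0 j * (n : ℝ) ^ b * ((R : ℝ) - (c : ℝ)))) -
            a * ∑ i ∈ Finset.Icc 1 c, Real.log (a / p0 i) -
            (n : ℝ) ^ (1 - b) *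
              ∑ j ∈ Finset.Icc (c + 1) R,
                ((nj j : ℝ) / (n : ℝ)) *
                  Real.log
                    (((nj j : ℝ) * ((R : ℝ) - (c : ℝ)) -
                        (n : ℝ) ^ b * (a * (c : ℝ) + (n : ℝ) ^ (1 - b) - 1)) /
                      ((nj j : ℝ) * (n : ℝ) ^ (b - 1) * ((R : ℝ) - (c : ℝ))))) := by
  have hn0 : (0:ℝ) < (n:ℝ) := by exact_mod_cast hn
  have hcltR : c < R := by omega
  have hRc : (0:ℝ) < (R:ℝ) - (c:ℝ) := by
    have : (c:ℝ) < (R:ℝ) := by exact_mod_cast hcltR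
    linarith
  set K : ℝ := a * (c:ℝ) + (n:ℝ) ^ (1 - b) - 1 with hKdef
  have hnb : (0:ℝ) < (n:ℝ) ^ b := Real.rpow_pos_of_pos hn0 b
  have hnb1 : (0:ℝ) < (n:ℝ) ^ (b - 1) := Real.rpow_pos_of_pos hn0 _
  have hn1b : (0:ℝ) < (n:ℝ) ^ (1 - b) := Real.rpow_pos_of_pos hn0 _
  have h1 : (n:ℝ) ^ (1 - b) * (n:ℝ) ^ b = (n:ℝ) := by
    rw [← Real.rpow_add hn0]; norm_num
  have h2 : (n:ℝ) ^ b = (n:ℝ) * (n:ℝ) ^ (b - 1) := by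
    nth_rewrite 2 [← Real.rpow_one (n:ℝ)]
    rw [← Real.rpow_add hn0]; ring_nf
  have hsum' :
      ∑ j ∈ Finset.Icc (c + 1) R,
          ((nj j : ℝ) / (n : ℝ) ^ b - K / ((R : ℝ) - (c : ℝ))) *
            Real.log
              (((nj j : ℝ) / (n : ℝ) ^ b - K / ((R : ℝ) - (c : ℝ))) / p0 j)
        =
      (n : ℝ) ^ (1 - b) *
          ∑ j ∈ Finset.Icc (c + 1) R,
            ((nj j : ℝ) / (n : ℝ)) * Real.log ((nj j : ℝ) / ((n : ℝ) * p0 j)) -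
        K / ((R : ℝ) - (c : ℝ)) *
          ∑ j ∈ Finset.Icc (c + 1) R,
            Real.log
              (((nj j : ℝ) * ((R : ℝ) - (c : ℝ)) - (n : ℝ) ^ b * K) /
                (p0 j * (n : ℝ) ^ b * ((R : ℝ) - (c : ℝ)))) +
        (n : ℝ) ^ (1 - b) *
          ∑ j ∈ Finset.Icc (c + 1) R,
            ((nj j : ℝ) / (n : ℝ)) *
              Real.log
                (((nj j : ℝ) * ((R : ℝ) - (c : ℝ)) - (n : ℝ) ^ b * K) /
                  ((nj j : ℝ) * (n : ℝ) ^ (b - 1) * ((R : ℝ) - (c : ℝ)))) := by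
    rw [Finset.mul_sum, Finset.mul_sum, Finset.mul_sum, ← Finset.sum_sub_distrib,
      ← Finset.sum_add_distrib]
    refine Finset.sum_congr rfl fun j hj => ?_
    have hjm := Finset.mem_Icc.mp hj
    have hpj : 0 < p0 j := hp0 j (Finset.mem_Icc.mpr ⟨by omega, hjm.2⟩)
    have hnjj : (0:ℝ) < (nj j : ℝ) := by exact_mod_cast hnj j hj
    have hqj : 0 < (nj j : ℝ) / (n : ℝ) ^ b - K / ((R : ℝ) - (c : ℝ)) := hpos j hj
    have hXeq : (nj j : ℝ) * ((R : ℝ) - (c : ℝ)) - (n : ℝ) ^ b * K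
        = ((nj j : ℝ) / (n : ℝ) ^ b - K / ((R : ℝ) - (c : ℝ))) *
            ((n : ℝ) ^ b * ((R : ℝ) - (c : ℝ))) := by
      field_simp
    have hX : 0 < (nj j : ℝ) * ((R : ℝ) - (c : ℝ)) - (n : ℝ) ^ b * K := by
      rw [hXeq]; positivity
    have step1 : ((nj j : ℝ) / (n : ℝ) ^ b - K / ((R : ℝ) - (c : ℝ))) / p0 j
        = ((nj j : ℝ) * ((R : ℝ) - (c : ℝ)) - (n : ℝ) ^ b * K) /
            (p0 j * (n : ℝ) ^ b * ((R : ℝ) - (c : ℝ))) := by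
      rw [hXeq, mul_assoc (p0 j)]
      exact (mul_div_mul_right _ _ (by positivity)).symm
    have step2 : ((nj j : ℝ) * ((R : ℝ) - (c : ℝ)) - (n : ℝ) ^ b * K) /
            (p0 j * (n : ℝ) ^ b * ((R : ℝ) - (c : ℝ)))
        = ((nj j : ℝ) / ((n : ℝ) * p0 j)) *
            (((nj j : ℝ) * ((R : ℝ) - (c : ℝ)) - (n : ℝ) ^ b * K) /
              ((nj j : ℝ) * (n : ℝ) ^ (b - 1) * ((R : ℝ) - (c : ℝ)))) := by
      rw [h2]
      field_simp
    have hA : ((nj j : ℝ) / ((n : ℝ) * p0 j)) ≠ 0 := by positivity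
    have hB : (((nj j : ℝ) * ((R : ℝ) - (c : ℝ)) - (n : ℝ) ^ b * K) /
        ((nj j : ℝ) * (n : ℝ) ^ (b - 1) * ((R : ℝ) - (c : ℝ)))) ≠ 0 := by positivity
    have h3 : (n:ℝ) ^ (1 - b) = (n:ℝ) / (n:ℝ) ^ b := by
      rw [eq_div_iff hnb.ne']; exact h1
    have hc0 : (n:ℝ) ^ (1 - b) * ((nj j : ℝ) / (n : ℝ))
        = (nj j : ℝ) / (n : ℝ) ^ b := by
      rw [h3]; field_simp
    rw [step1, step2, Real.log_mul hA hB]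
    linear_combination
      (-(Real.log ((nj j : ℝ) / ((n : ℝ) * p0 j)) +
        Real.log (((nj j : ℝ) * ((R : ℝ) - (c : ℝ)) - (n : ℝ) ^ b * K) /
          ((nj j : ℝ) * (n : ℝ) ^ (b - 1) * ((R : ℝ) - (c : ℝ)))))) * hc0
  have hSa : ∑ i ∈ Finset.Icc 1 c, a * Real.log (a / p0 i)
      = a * ∑ i ∈ Finset.Icc 1 c, Real.log (a / p0 i) := by
    rw [Finset.mul_sum]
  linear_combination 2 * (n:ℝ) * hsum' + 2 * (n:ℝ) * hSa
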